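/- For d ∈ (0, 2g−2], consider the set F̃_d = {(M, μ, ν) : M ∈ Pic^d(X), μ ∈ H⁰(M⁻¹K) \ {0}, ν ∈ H⁰(MK)} with the ℂ*-action λ·(M,μ,ν) = (M, λμ, λ⁻¹ν). This action is free, and the map F_d = F̃_d/ℂ* → Sym^{2g−2−d}(X) sending [(M,μ,ν)] to the divisor of μ is surjective with fiber over D ∈ Sym^{2g−2−d}(X) in bijection with H⁰(O(−D)K²) ≅ ℂ^{d+g−1}. -/
import Mathlib

namespace FdAux

variable {Pic : Type*} (H0 : Pic → Type*)

def tr {L L' : Pic} (h : L = L') (s : H0 L) : H0 L' := h ▸ s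

@[simp] lemma tr_tr {L L' L'' : Pic} (h : L = L') (h' : L' = L'') (s : H0 L) :
    tr H0 h' (tr H0 h s) = tr H0 (h.trans h') s := by subst h h'; rfl

@[simp] lemma tr_refl {L : Pic} (h : L = L) (s : H0 L) : tr H0 h s = s := rfl

section
variable [∀ L, AddCommGroup (H0 L)] [∀ L, Module ℂ (H0 L)]

omit [(L : Pic) → Module ℂ (H0 L)] in
lemma tr_ne_zero {L L' : Pic} (h : L = L') {s : H0 L} (hs : s ≠ 0) : tr H0 h s ≠ 0 := by
  subst h; exact hs

lemma tr_smul {L L' : Pic} (h : L = L') (c : ℂ) (s : H0 L) :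
    tr H0 h (c • s) = c • tr H0 h s := by subst h; rfl

end

lemma div_tr {EffDiv : Type*} (div : (L : Pic) → H0 L → EffDiv)
    {L L' : Pic} (h : L = L') (s : H0 L) : div L' (tr H0 h s) = div L s := by subst h; rfl

lemma comm_aux1 {G : Type*} [CommGroup G] (a b : G) : a = (a⁻¹ * b)⁻¹ * b := by
  rw [mul_inv_rev, inv_inv, mul_comm b⁻¹ a, mul_assoc, inv_mul_cancel, mul_one]

lemma smul_cancel {V : Type*} [AddCommGroup V] [Module ℂ V] {a b : ℂ} {v : V}
    (hv : v ≠ 0) (h : a • v = b • v) : a = b := by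
  by_contra hab
  have h0 : (a - b) • v = 0 := by rw [sub_smul, h, sub_self]
  rcases smul_eq_zero.mp h0 with h1 | h2
  · exact hab (sub_eq_zero.mp h1)
  · exact hv h2

end FdAux

/-- For `0 < d ≤ 2g−2` consider
`F̃_d = {(M, μ, ν) : M ∈ Pic^d(X), μ ∈ H⁰(M⁻¹K) \ {0}, ν ∈ H⁰(MK)}` with the
`ℂ*`-action `λ·(M,μ,ν) = (M, λμ, λ⁻¹ν)`.  The action is free, and the map
`F_d = F̃_d/ℂ* → Sym^{2g−2−d}(X)`, `[(M,μ,ν)] ↦ div(μ)`, is well defined and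
surjective, with fiber over `D` in bijection with `H⁰(O(−D)K²) ≅ ℂ^{d+g−1}`.

We axiomatize divisor/section theory on a compact Riemann surface `X` of genus
`g ≥ 2`: `Pic` is the group of line bundles with degree `deg` and canonical
bundle `K`; `H0 L` is the (complex vector) space of sections of `L`; `EffDiv` is
the set of effective divisors (`Sym(X)`), graded by `degD`; `div` assigns to a
nonzero section its divisor of zeros, `OD D` is the line bundle of a divisor.
The standing facts (the divisor of a nonzero section has degree `deg L` and
determines the bundle and the section up to scale, every effective divisor is a
divisor of zeros, and `h⁰(L) = deg L + 1 − g` for `deg L > 2g−2`) are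
hypotheses. -/
theorem Fd_free_action_and_fibration
    (Pic : Type*) [CommGroup Pic] (deg : Pic → ℤ)
    (hdeg : ∀ L N : Pic, deg (L * N) = deg L + deg N)
    (g : ℕ) (hg : 2 ≤ g) (K : Pic) (hK : deg K = 2 * g - 2)
    (H0 : Pic → Type*) [∀ L, AddCommGroup (H0 L)] [∀ L, Module ℂ (H0 L)]
    (EffDiv : Type*) (degD : EffDiv → ℕ)
    (div : (L : Pic) → H0 L → EffDiv) (OD : EffDiv → Pic)
    (hOD : ∀ D, deg (OD D) = degD D)
    (hdivdeg : ∀ (L : Pic) (s : H0 L), s ≠ 0 → (degD (div L s) : ℤ) = deg L)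
    (hdivOD : ∀ (L : Pic) (s : H0 L), s ≠ 0 → OD (div L s) = L)
    (hdivsmul : ∀ (L : Pic) (s : H0 L) (c : ℂˣ), div L ((c : ℂ) • s) = div L s)
    (hdivinj : ∀ (L : Pic) (s t : H0 L), s ≠ 0 → t ≠ 0 → div L s = div L t →
      ∃ c : ℂˣ, t = (c : ℂ) • s)
    (hdivsurj : ∀ D : EffDiv, ∃ s : H0 (OD D), s ≠ 0 ∧ div (OD D) s = D)
    (hdim : ∀ L : Pic, 2 * (g : ℤ) - 2 < deg L →
      (Module.finrank ℂ (H0 L) : ℤ) = deg L + 1 - g)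
    (d : ℕ) (hd0 : 0 < d) (hd1 : d ≤ 2 * g - 2) :
    -- F̃_d and the ℂ*-action relation
    let FdTil := {x : (M : Pic) × (H0 (M⁻¹ * K) × H0 (M * K)) //
      deg x.1 = d ∧ x.2.1 ≠ 0}
    let r : FdTil → FdTil → Prop := fun x y => ∃ c : ℂˣ,
      y.val = ⟨x.val.1, ((c : ℂ) • x.val.2.1, ((c⁻¹ : ℂˣ) : ℂ) • x.val.2.2)⟩
    -- (1) the ℂ*-action is free
    (∀ (x : FdTil) (c : ℂˣ),
      (⟨x.val.1, ((c : ℂ) • x.val.2.1, ((c⁻¹ : ℂˣ) : ℂ) • x.val.2.2)⟩ :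
        (M : Pic) × (H0 (M⁻¹ * K) × H0 (M * K))) = x.val → c = 1) ∧
    -- (2) the divisor of μ lies in Sym^{2g−2−d}(X)
    (∀ x : FdTil, (degD (div (x.val.1⁻¹ * K) x.val.2.1) : ℤ) = 2 * g - 2 - d) ∧
    -- (3) the induced map F_d = F̃_d/ℂ* → Sym^{2g−2−d}(X) is well defined,
    -- surjective, and its fiber over D is in bijection with H⁰(O(−D)K²),
    -- a vector space of dimension d + g − 1
    (∃ p : Quot r → EffDiv,
      (∀ x : FdTil, p (Quot.mk r x) = div (x.val.1⁻¹ * K) x.val.2.1) ∧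
      (∀ D : EffDiv, (degD D : ℤ) = 2 * g - 2 - d →
        (∃ y : Quot r, p y = D) ∧
        Nonempty ({y : Quot r // p y = D} ≃ H0 ((OD D)⁻¹ * K ^ 2)) ∧
        (Module.finrank ℂ (H0 ((OD D)⁻¹ * K ^ 2)) : ℤ) = d + g - 1)) := by
  intro FdTil r
  classical
  have deg_one : deg 1 = 0 := by have h := hdeg 1 1; rw [one_mul] at h; linarith
  have deg_inv : ∀ L : Pic, deg L⁻¹ = -deg L := by
    intro L
    have h := hdeg L L⁻¹
    rw [mul_inv_cancel, deg_one] at h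
    linarith
  refine ⟨?_, ?_, ?_⟩
  · -- (1) freeness
    rintro ⟨⟨M, μ, ν⟩, hM, hμ⟩ c hx
    injection hx with h1 h2
    have h3 : (c : ℂ) • μ = μ := congrArg Prod.fst h2
    exact Units.ext (FdAux.smul_cancel hμ (h3.trans (one_smul ℂ μ).symm))
  · -- (2) degree of div μ
    rintro ⟨⟨M, μ, ν⟩, hM, hμ⟩
    show (degD (div (M⁻¹ * K) μ) : ℤ) = 2 * g - 2 - d
    have h1 := hdivdeg (M⁻¹ * K) μ hμ
    rw [h1, hdeg, deg_inv, hM, hK]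
    ring
  · -- (3) the fibration
    have pconst : ∀ x y : FdTil, r x y →
        div (x.val.1⁻¹ * K) x.val.2.1 = div (y.val.1⁻¹ * K) y.val.2.1 := by
      rintro x ⟨yval, hyp⟩ ⟨c, hc⟩
      dsimp only at hc
      subst hc
      exact (hdivsmul _ _ c).symm
    set pfun : FdTil → EffDiv := fun x => div (x.val.1⁻¹ * K) x.val.2.1 with hpfun
    refine ⟨Quot.lift pfun pconst, fun x => rfl, ?_⟩
    intro D hD
    obtain ⟨s₀, hs₀, hs₀div⟩ := hdivsurj D
    have hA : OD D = ((OD D)⁻¹ * K)⁻¹ * K := FdAux.comm_aux1 (OD D) K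
    have hB : (OD D)⁻¹ * K ^ 2 = ((OD D)⁻¹ * K) * K := by
      rw [pow_two, mul_assoc]
    have hdegMD : deg ((OD D)⁻¹ * K) = (d : ℤ) := by
      rw [hdeg, deg_inv, hOD, hD, hK]; ring
    set can : H0 ((OD D)⁻¹ * K ^ 2) → FdTil := fun ν =>
      ⟨⟨(OD D)⁻¹ * K, (FdAux.tr H0 hA s₀, FdAux.tr H0 hB ν)⟩,
        hdegMD, FdAux.tr_ne_zero H0 hA hs₀⟩ with hcan
    have hcanp : ∀ ν, pfun (can ν) = D := fun ν =>
      (FdAux.div_tr H0 div hA s₀).trans hs₀div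
    have hODx : ∀ (x : FdTil), pfun x = D → OD D = x.val.1⁻¹ * K := fun x h =>
      (congrArg OD h.symm).trans (hdivOD _ _ x.prop.2)
    have hval1 : ∀ (x : FdTil) (h : pfun x = D), x.val.1 = (OD D)⁻¹ * K := by
      intro x h
      rw [hODx x h]
      exact FdAux.comm_aux1 _ _
    have h2K : ∀ (x : FdTil) (h : pfun x = D), x.val.1 * K = (OD D)⁻¹ * K ^ 2 := by
      intro x h; rw [hval1 x h, pow_two, mul_assoc]
    have hinj : ∀ (x : FdTil) (h : pfun x = D),
        ∃ c : ℂˣ, x.val.2.1 = (c : ℂ) • FdAux.tr H0 (hODx x h) s₀ := fun x h =>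
      hdivinj _ _ _ (FdAux.tr_ne_zero H0 _ hs₀) x.prop.2
        (((FdAux.div_tr H0 div _ s₀).trans hs₀div).trans h.symm)
    set G : FdTil → H0 ((OD D)⁻¹ * K ^ 2) := fun x =>
      if h : pfun x = D then
        FdAux.tr H0 (h2K x h) ((((hinj x h).choose : ℂˣ) : ℂ) • x.val.2.2)
      else 0 with hG
    have hGconst : ∀ x y : FdTil, r x y → G x = G y := by
      rintro x ⟨yval, hyp⟩ ⟨c, hc⟩
      dsimp only at hc
      subst hc
      set y : FdTil := ⟨⟨x.val.1, ((c : ℂ) • x.val.2.1,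
        ((c⁻¹ : ℂˣ) : ℂ) • x.val.2.2)⟩, hyp⟩ with hy
      by_cases h : pfun x = D
      · have hyD : pfun y = D := by
          show div (x.val.1⁻¹ * K) ((c : ℂ) • x.val.2.1) = D
          rw [hdivsmul]; exact h
        have hcx := (hinj x h).choose_spec
        have hcy := (hinj y hyD).choose_spec
        have hs' : FdAux.tr H0 (hODx x h) s₀ ≠ 0 := FdAux.tr_ne_zero H0 _ hs₀
        have hcy' : (c : ℂ) • x.val.2.1 =
            ((hinj y hyD).choose : ℂ) • FdAux.tr H0 (hODx x h) s₀ := hcy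
        have hcyval : ((hinj y hyD).choose : ℂ) = (c : ℂ) * ((hinj x h).choose : ℂ) := by
          refine (FdAux.smul_cancel hs' ?_).symm
          rw [← smul_smul, ← hcx, ← hcy']
        simp only [hG]
        rw [dif_pos h, dif_pos hyD]
        show FdAux.tr H0 (h2K x h) _ = FdAux.tr H0 (h2K x h)
          (((hinj y hyD).choose : ℂ) • (((c⁻¹ : ℂˣ) : ℂ) • x.val.2.2))
        refine congrArg _ ?_
        rw [smul_smul, hcyval, Units.val_inv_eq_inv_val,
          mul_comm ((c : ℂ)) (((hinj x h).choose : ℂ)), mul_assoc,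
          mul_inv_cancel₀ (Units.ne_zero c), mul_one]
      · have hyD : ¬ pfun y = D := by
          intro hyD
          apply h
          have : div (x.val.1⁻¹ * K) ((c : ℂ) • x.val.2.1) = D := hyD
          rwa [hdivsmul] at this
        simp only [hG]
        rw [dif_neg h, dif_neg hyD]
    refine ⟨⟨Quot.mk r (can 0), hcanp 0⟩, ⟨⟨fun y => Quot.lift G hGconst y.1,
      fun ν => ⟨Quot.mk r (can ν), hcanp ν⟩, ?_, ?_⟩⟩, ?_⟩
    · -- left inverse
      rintro ⟨q, hq⟩
      revert hq
      induction q using Quot.ind with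
      | _ x =>
      intro hq
      apply Subtype.ext
      show Quot.mk r (can (G x)) = Quot.mk r x
      have h : pfun x = D := hq
      refine (Quot.sound ?_).symm
      have hcx := (hinj x h).choose_spec
      obtain ⟨⟨M, μ, ν⟩, hx⟩ := x
      have hMeq : M = (OD D)⁻¹ * K := hval1 _ h
      subst hMeq
      refine ⟨((hinj ⟨⟨(OD D)⁻¹ * K, (μ, ν)⟩, hx⟩ h).choose)⁻¹, ?_⟩
      show (⟨(OD D)⁻¹ * K, (FdAux.tr H0 hA s₀,
          FdAux.tr H0 hB (G ⟨⟨(OD D)⁻¹ * K, (μ, ν)⟩, hx⟩))⟩ :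
          (M : Pic) × (H0 (M⁻¹ * K) × H0 (M * K))) = _
      refine congrArg (Sigma.mk ((OD D)⁻¹ * K)) ?_
      have hcx' : μ = ((hinj ⟨⟨(OD D)⁻¹ * K, (μ, ν)⟩, hx⟩ h).choose : ℂ) •
          FdAux.tr H0 hA s₀ := hcx
      refine Prod.ext ?_ ?_
      · show FdAux.tr H0 hA s₀ =
          (((hinj ⟨⟨(OD D)⁻¹ * K, (μ, ν)⟩, hx⟩ h).choose⁻¹ : ℂˣ) : ℂ) • μ
        have e1 : (((hinj ⟨⟨(OD D)⁻¹ * K, (μ, ν)⟩, hx⟩ h).choose⁻¹ : ℂˣ) : ℂ) • μ =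
            (((hinj ⟨⟨(OD D)⁻¹ * K, (μ, ν)⟩, hx⟩ h).choose⁻¹ : ℂˣ) : ℂ) •
              (((hinj ⟨⟨(OD D)⁻¹ * K, (μ, ν)⟩, hx⟩ h).choose : ℂ) •
                FdAux.tr H0 hA s₀) := congrArg _ hcx'
        rw [e1, smul_smul, Units.val_inv_eq_inv_val,
          inv_mul_cancel₀ (Units.ne_zero _), one_smul]
      · show FdAux.tr H0 hB (G ⟨⟨(OD D)⁻¹ * K, (μ, ν)⟩, hx⟩) =
          ((((hinj ⟨⟨(OD D)⁻¹ * K, (μ, ν)⟩, hx⟩ h).choose⁻¹)⁻¹ : ℂˣ) : ℂ) • ν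
        simp only [hG]
        rw [dif_pos h, FdAux.tr_tr, FdAux.tr_refl, inv_inv]
    · -- right inverse
      intro ν
      show G (can ν) = ν
      simp only [hG]
      rw [dif_pos (hcanp ν)]
      have hcx := (hinj (can ν) (hcanp ν)).choose_spec
      have h1 : ((hinj (can ν) (hcanp ν)).choose : ℂ) = 1 := by
        refine (FdAux.smul_cancel (FdAux.tr_ne_zero H0 hA hs₀) ?_).symm
        rw [one_smul]
        exact hcx
      show FdAux.tr H0 (h2K (can ν) (hcanp ν))
        (((hinj (can ν) (hcanp ν)).choose : ℂ) • FdAux.tr H0 hB ν) = ν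
      rw [h1, one_smul, FdAux.tr_tr, FdAux.tr_refl]
    · -- dimension
      have hdeg2 : deg ((OD D)⁻¹ * K ^ 2) = 2 * (g : ℤ) - 2 + d := by
        rw [pow_two, hdeg, hdeg, deg_inv, hOD, hD, hK]; ring
      have hdpos : (0 : ℤ) < d := by exact_mod_cast hd0
      have hfin := hdim _ (by rw [hdeg2]; linarith)
      rw [hfin, hdeg2]; ring
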